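/- arXiv:2503.15765 — 2 statements merged into one kernel-verified Lean document; each statement's English description precedes it below -/
import Mathlib

section
/- Let $\hat{\lambda}$ be an eigenvalue of a holomorphic matrix family $T : D \to \mathbb{C}^{n \times n}$ that is algebraically simple, meaning $\det T(\hat\lambda) = 0$ and $\frac{d}{d\lambda} \det T(\lambda)\big|_{\lambda = \hat\lambda} \neq 0$. Then $\hat\lambda$ is geometrically simple, i.e., $\dim \ker T(\hat\lambda) = 1$. -/
open Matrix

/-- Determinant of a matrix with entrywise differentiable entries is differentiable. -/
lemma differentiableAt_det_aux {n : ℕ} {M : ℂ → Matrix (Fin n) (Fin n) ℂ} {x : ℂ}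
    (h : ∀ i j, DifferentiableAt ℂ (fun l => M l i j) x) :
    DifferentiableAt ℂ (fun l => (M l).det) x := by
  have hfun : (fun l => (M l).det) =
      fun l => ∑ σ : Equiv.Perm (Fin n),
        ((Equiv.Perm.sign σ : ℤ) : ℂ) * ∏ i, M l (σ i) i := by
    funext l
    rw [Matrix.det_apply]
    congr 1
    funext σ
    simp [Units.smul_def, zsmul_eq_mul]
  rw [hfun]
  refine DifferentiableAt.fun_sum fun σ _ => ?_
  exact (DifferentiableAt.fun_finsetProd fun i _ => h (σ i) i).const_mul _

/-- A module of dimension at least two contains an independent pair. -/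
lemma exists_indep_pair (V : Type*) [AddCommGroup V] [Module ℂ V] [Module.Finite ℂ V]
    (h : 2 ≤ Module.finrank ℂ V) :
    ∃ u v : V, ∀ s t : ℂ, s • u + t • v = 0 → s = 0 ∧ t = 0 := by
  let b := Module.finBasis ℂ V
  let i0 : Fin (Module.finrank ℂ V) := ⟨0, by omega⟩
  let i1 : Fin (Module.finrank ℂ V) := ⟨1, by omega⟩
  have h01 : i0 ≠ i1 := by simp [i0, i1, Fin.ext_iff]
  refine ⟨b i0, b i1, fun s t hst => ?_⟩
  have hrepr := congrArg b.repr hst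
  rw [map_add, _root_.map_smul, _root_.map_smul, b.repr_self, b.repr_self, map_zero] at hrepr
  constructor
  · have := DFunLike.congr_fun hrepr i0
    simpa [Finsupp.single_apply, h01, h01.symm] using this
  · have := DFunLike.congr_fun hrepr i1
    simpa [Finsupp.single_apply, h01, h01.symm] using this

/-- If the kernel of `mulVecLin A` has dimension at least 2, the adjugate vanishes. -/
lemma adjugate_eq_zero_of_two_le {n : ℕ} {A : Matrix (Fin n) (Fin n) ℂ}
    (h : 2 ≤ Module.finrank ℂ (LinearMap.ker A.mulVecLin)) :
    adjugate A = 0 := by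
  obtain ⟨u, v, hu, hv, hind⟩ :
      ∃ u v : Fin n → ℂ, A *ᵥ u = 0 ∧ A *ᵥ v = 0 ∧
        ∀ s t : ℂ, s • u + t • v = 0 → s = 0 ∧ t = 0 := by
    obtain ⟨u, v, huv⟩ := exists_indep_pair (LinearMap.ker A.mulVecLin) h
    have hu : A *ᵥ (u : Fin n → ℂ) = 0 := by
      have := u.2
      rwa [LinearMap.mem_ker, Matrix.mulVecLin_apply] at this
    have hv : A *ᵥ (v : Fin n → ℂ) = 0 := by
      have := v.2
      rwa [LinearMap.mem_ker, Matrix.mulVecLin_apply] at this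
    refine ⟨(u : Fin n → ℂ), (v : Fin n → ℂ), hu, hv, fun s t hst => ?_⟩
    apply huv s t
    apply Subtype.ext
    rw [Submodule.coe_add, Submodule.coe_smul, Submodule.coe_smul, ZeroMemClass.coe_zero]
    exact hst
  have hu0 : u ≠ 0 := by
    intro hc
    have := (hind 1 0 (by simp [hc])).1
    simp at this
  have hdet : ∀ (j : Fin n) (b : Fin n → ℂ), (A.updateRow j b).det = 0 := by
    intro j b
    rw [← Matrix.exists_mulVec_eq_zero_iff]
    by_cases hbu : b ⬝ᵥ u = 0
    · refine ⟨u, hu0, ?_⟩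
      funext i
      have hrow : (A.updateRow j b *ᵥ u) i = A.updateRow j b i ⬝ᵥ u := rfl
      rcases eq_or_ne i j with rfl | hij
      · rw [hrow, Matrix.updateRow_self] at *
        simpa using hbu
      · have h1 : A i ⬝ᵥ u = 0 := congrFun hu i
        rw [hrow, Matrix.updateRow_ne hij]
        simpa using h1
    · refine ⟨(b ⬝ᵥ v) • u - (b ⬝ᵥ u) • v, ?_, ?_⟩
      · intro hc
        have hc' : (b ⬝ᵥ v) • u + (-(b ⬝ᵥ u)) • v = 0 := by
          rw [neg_smul, ← sub_eq_add_neg]; exact hc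
        have := (hind _ _ hc').2
        exact hbu (by simpa using this)
      · funext i
        have hrow : (A.updateRow j b *ᵥ ((b ⬝ᵥ v) • u - (b ⬝ᵥ u) • v)) i
            = A.updateRow j b i ⬝ᵥ ((b ⬝ᵥ v) • u - (b ⬝ᵥ u) • v) := rfl
        rcases eq_or_ne i j with rfl | hij
        · rw [hrow, Matrix.updateRow_self, dotProduct_sub,
            dotProduct_smul, dotProduct_smul]
          simp [smul_eq_mul]
          ring
        · have h1 : A i ⬝ᵥ u = 0 := congrFun hu i
          have h2 : A i ⬝ᵥ v = 0 := congrFun hv i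
          rw [hrow, Matrix.updateRow_ne hij, dotProduct_sub,
            dotProduct_smul, dotProduct_smul]
          simp [smul_eq_mul, h1, h2]
  ext i j
  rw [Matrix.adjugate_apply, hdet, Matrix.zero_apply]

/-- an algebraically simple eigenvalue of a holomorphic matrix family is
geometrically simple: if `det T(λ̂) = 0` and `(det ∘ T)'(λ̂) ≠ 0`, then
`dim ker T(λ̂) = 1`. -/
theorem algebraically_simple_implies_geometrically_simple
    {n : ℕ} (D : Set ℂ) (hD : IsOpen D)
    (T : ℂ → Matrix (Fin n) (Fin n) ℂ)
    (hT : ∀ i j, DifferentiableOn ℂ (fun lam => T lam i j) D)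
    (lam : ℂ) (hlam : lam ∈ D)
    (h0 : (T lam).det = 0)
    (h1 : deriv (fun l => (T l).det) lam ≠ 0) :
    Module.finrank ℂ (LinearMap.ker (T lam).mulVecLin) = 1 := by
  have hTd : ∀ i j, DifferentiableAt ℂ (fun l => T l i j) lam := fun i j =>
    (hT i j).differentiableAt (hD.mem_nhds hlam)
  obtain ⟨v, hv0, hv⟩ : ∃ v ≠ 0, (T lam) *ᵥ v = 0 :=
    (Matrix.exists_mulVec_eq_zero_iff).mpr h0
  have hmem : v ∈ LinearMap.ker (T lam).mulVecLin := by
    rw [LinearMap.mem_ker, Matrix.mulVecLin_apply]; exact hv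
  have hpos : 0 < Module.finrank ℂ (LinearMap.ker (T lam).mulVecLin) := by
    have : Nontrivial (LinearMap.ker (T lam).mulVecLin) :=
      nontrivial_of_ne ⟨v, hmem⟩ 0 (by simpa using hv0)
    exact Module.finrank_pos
  by_contra hne
  have h2 : 2 ≤ Module.finrank ℂ (LinearMap.ker (T lam).mulVecLin) := by omega
  have hadj0 : adjugate (T lam) = 0 := adjugate_eq_zero_of_two_le h2
  have hn : n ≠ 0 := by
    intro hc
    subst hc
    rw [Matrix.det_fin_zero] at h0
    exact one_ne_zero h0
  have hadjd : ∀ k j, DifferentiableAt ℂ (fun l => adjugate (T l) k j) lam := by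
    intro k j
    have heq : (fun l => adjugate (T l) k j) =
        fun l => ((T l).updateRow j (Pi.single k 1)).det := by
      funext l; rw [Matrix.adjugate_apply]
    rw [heq]
    apply differentiableAt_det_aux
    intro a c
    rcases eq_or_ne a j with rfl | hne'
    · simp only [Matrix.updateRow_self, Matrix.updateRow_apply, if_pos rfl]
      exact differentiableAt_const _
    · simpa [Matrix.updateRow_apply, hne'] using hTd a c
  set c := deriv (fun l => (T l).det) lam with hc
  set Dm : Matrix (Fin n) (Fin n) ℂ :=
    Matrix.of (fun k j => deriv (fun l => adjugate (T l) k j) lam) with hDm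
  have hkey : (T lam) * Dm = c • (1 : Matrix (Fin n) (Fin n) ℂ) := by
    ext i j
    have hfeq : (fun l => (T l).det * (1 : Matrix (Fin n) (Fin n) ℂ) i j) =
        fun l => ∑ k, T l i k * adjugate (T l) k j := by
      funext l
      have hma := Matrix.mul_adjugate (T l)
      calc (T l).det * (1 : Matrix (Fin n) (Fin n) ℂ) i j
          = ((T l).det • (1 : Matrix (Fin n) (Fin n) ℂ)) i j := by
            simp [Matrix.smul_apply, smul_eq_mul]
        _ = ((T l) * adjugate (T l)) i j := by rw [hma]
        _ = ∑ k, T l i k * adjugate (T l) k j := Matrix.mul_apply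
    have hdetd : DifferentiableAt ℂ (fun l => (T l).det) lam :=
      differentiableAt_det_aux hTd
    have hL : deriv (fun l => (T l).det * (1 : Matrix (Fin n) (Fin n) ℂ) i j) lam =
        c * (1 : Matrix (Fin n) (Fin n) ℂ) i j := by
      rw [deriv_mul_const hdetd]
    have hR : deriv (fun l => ∑ k, T l i k * adjugate (T l) k j) lam =
        ∑ k, T lam i k * Dm k j := by
      rw [deriv_fun_sum (fun k _ => (hTd i k).fun_mul (hadjd k j))]
      congr 1
      funext k
      rw [deriv_fun_mul (hTd i k) (hadjd k j)]
      have hz : adjugate (T lam) k j = 0 := by rw [hadj0]; rfl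
      rw [hz, mul_zero, zero_add]
      rfl
    have heq2 : c * (1 : Matrix (Fin n) (Fin n) ℂ) i j = ∑ k, T lam i k * Dm k j := by
      rw [← hL, ← hR, hfeq]
    rw [Matrix.mul_apply, Matrix.smul_apply, smul_eq_mul, ← heq2]
  have hdet := congrArg Matrix.det hkey
  rw [Matrix.det_mul, h0, zero_mul, Matrix.det_smul, Matrix.det_one, mul_one] at hdet
  have hc0 : c = 0 := by
    have := hdet.symm
    rwa [pow_eq_zero_iff (by simpa using hn)] at this
  exact h1 hc0
end

section
/- Let $T : D \to \mathbb{C}^{n \times n}$ be a holomorphic matrix family and $(\hat{y}, \hat{\lambda}, \hat{x})$ an eigentriplet: $T(\hat\lambda)\hat{x} = 0$, $T(\hat\lambda)^* \hat{y} = 0$ with $\hat x, \hat y \neq 0$. Then $\hat\lambda$ is algebraically simple (i.e., $\det T$ has a simple zero at $\hat\lambda$) if and only if $\hat\lambda$ is geometrically simple ($\dim\ker T(\hat\lambda) = 1$) and $\hat{y}^* T'(\hat{\lambda}) \hat{x} \neq 0$. -/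
open Matrix Finset Module

lemma det_hasDerivAt {n : ℕ} (T : ℂ → Matrix (Fin n) (Fin n) ℂ)
    (B : Matrix (Fin n) (Fin n) ℂ) (lam : ℂ)
    (h : ∀ i j, HasDerivAt (fun l => T l i j) (B i j) lam) :
    HasDerivAt (fun l => (T l).det)
      (∑ k, ((T lam).updateRow k (B k)).det) lam := by
  have e1 : ∀ l, (T l).det =
      ∑ σ : Equiv.Perm (Fin n), ((Equiv.Perm.sign σ : ℤ) : ℂ) * ∏ i, T l (σ i) i := by
    intro l; exact Matrix.det_apply' _
  have main : HasDerivAt (fun l => ∑ σ : Equiv.Perm (Fin n),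
      ((Equiv.Perm.sign σ : ℤ) : ℂ) * ∏ i, T l (σ i) i)
      (∑ σ : Equiv.Perm (Fin n), ((Equiv.Perm.sign σ : ℤ) : ℂ) *
        (∑ k, (∏ j ∈ univ.erase k, T lam (σ j) j) • B (σ k) k)) lam := by
    apply HasDerivAt.fun_sum
    intro σ _
    exact (HasDerivAt.fun_finsetProd (fun i _ => h (σ i) i)).const_mul _
  have e2 : (∑ k, ((T lam).updateRow k (B k)).det)
      = ∑ σ : Equiv.Perm (Fin n), ((Equiv.Perm.sign σ : ℤ) : ℂ) *
        (∑ k, (∏ j ∈ univ.erase k, T lam (σ j) j) • B (σ k) k) := by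
    calc (∑ k, ((T lam).updateRow k (B k)).det)
        = ∑ k, ∑ σ : Equiv.Perm (Fin n), ((Equiv.Perm.sign σ : ℤ) : ℂ) *
            ∏ j, ((T lam).updateRow k (B k)) (σ j) j := by
          simp only [Matrix.det_apply']
      _ = ∑ σ : Equiv.Perm (Fin n), ∑ k, ((Equiv.Perm.sign σ : ℤ) : ℂ) *
            ∏ j, ((T lam).updateRow k (B k)) (σ j) j := Finset.sum_comm
      _ = _ := by
          refine Finset.sum_congr rfl fun σ _ => ?_
          rw [← Finset.mul_sum]
          congr 1
          rw [← Equiv.sum_comp σ (fun k => ∏ j, ((T lam).updateRow k (B k)) (σ j) j)]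
          refine Finset.sum_congr rfl fun m _ => ?_
          rw [smul_eq_mul, ← Finset.mul_prod_erase univ _ (Finset.mem_univ m),
            Matrix.updateRow_self, mul_comm]
          congr 1
          refine Finset.prod_congr rfl fun j hj => ?_
          have hne : σ j ≠ σ m := fun hc => (Finset.mem_erase.mp hj).1 (σ.injective hc)
          simp [Matrix.updateRow_ne hne]
  rw [e2]
  simp only [← e1] at main
  exact main

lemma updateRow_mulVec_zero {n : ℕ} (A : Matrix (Fin n) (Fin n) ℂ) (i : Fin n)
    (r v : Fin n → ℂ) (hAv : A *ᵥ v = 0) (hrv : r ⬝ᵥ v = 0) :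
    (A.updateRow i r) *ᵥ v = 0 := by
  funext k
  by_cases hk : k = i
  · subst hk
    simpa [Matrix.mulVec, Matrix.updateRow_self] using hrv
  · have := congrFun hAv k
    simpa [Matrix.mulVec, Matrix.updateRow_ne hk] using this

lemma det_updateRow_eq {n : ℕ} (A : Matrix (Fin n) (Fin n) ℂ) (k : Fin n) (r : Fin n → ℂ) :
    (A.updateRow k r).det = ∑ j, A.adjugate j k * r j := by
  rw [← Matrix.det_transpose, ← Matrix.updateCol_transpose, ← Matrix.cramer_apply,
    Matrix.cramer_eq_adjugate_mulVec, ← Matrix.adjugate_transpose]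
  simp [Matrix.mulVec, dotProduct]

open scoped ComplexOrder in
lemma dot_star_self_ne_zero {n : ℕ} {x : Fin n → ℂ} (hx : x ≠ 0) :
    dotProduct (star x) x ≠ 0 :=
  fun h => hx (dotProduct_star_self_eq_zero.mp h)

lemma adjugate_structure {n : ℕ} (A : Matrix (Fin n) (Fin n) ℂ)
    (x y : Fin n → ℂ) (hx : x ≠ 0) (hy : y ≠ 0)
    (hxe : A *ᵥ x = 0) (hyA : star y ᵥ* A = 0)
    (h1 : finrank ℂ (LinearMap.ker A.mulVecLin) = 1) :
    ∃ α : ℂ, α ≠ 0 ∧ ∀ i j, A.adjugate i j = α * x i * star (y j) := by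
  classical
  have hdetA : A.det = 0 := Matrix.exists_mulVec_eq_zero_iff.mp ⟨x, hx, hxe⟩
  have hxker : x ∈ LinearMap.ker A.mulVecLin := by
    simpa [Matrix.mulVecLin_apply] using hxe
  -- kernel is the span of x
  have hker : LinearMap.ker A.mulVecLin = Submodule.span ℂ {x} := by
    refine (Submodule.eq_of_le_of_finrank_le
      ((Submodule.span_singleton_le_iff_mem x _).mpr hxker) ?_).symm
    rw [h1, finrank_span_singleton hx]
  -- columns of the adjugate lie in the kernel
  have hcol : ∀ j, ∃ c : ℂ, (fun i => A.adjugate i j) = c • x := by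
    intro j
    have hmem : (fun i => A.adjugate i j) ∈ LinearMap.ker A.mulVecLin := by
      rw [LinearMap.mem_ker]
      have h0 : A * A.adjugate = 0 := by rw [Matrix.mul_adjugate, hdetA, zero_smul]
      funext k
      have := congrFun (congrFun h0 k) j
      simpa [Matrix.mulVecLin_apply, Matrix.mulVec, dotProduct,
        Matrix.mul_apply] using this
    rw [hker] at hmem
    obtain ⟨c, hc⟩ := Submodule.mem_span_singleton.mp hmem
    exact ⟨c, hc.symm⟩
  choose c hc using hcol
  have hadj : ∀ i j, A.adjugate i j = c j * x i := by
    intro i j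
    have := congrFun (hc j) i
    simpa using this
  -- c lies in the kernel of the transpose
  obtain ⟨i₁, hi₁⟩ : ∃ i, x i ≠ 0 := Function.ne_iff.mp hx
  have hcker : Aᵀ *ᵥ c = 0 := by
    rw [Matrix.mulVec_transpose]
    have h0 : A.adjugate * A = 0 := by rw [Matrix.adjugate_mul, hdetA, zero_smul]
    funext k
    have h2 := congrFun (congrFun h0 i₁) k
    simp only [Matrix.mul_apply, Matrix.zero_apply] at h2
    have h3 : ∑ j, A.adjugate i₁ j * A j k = x i₁ * ∑ j, c j * A j k := by
      rw [Finset.mul_sum]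
      refine Finset.sum_congr rfl fun j _ => ?_
      rw [hadj i₁ j]; ring
    rw [h3] at h2
    have h4 := (mul_eq_zero.mp h2).resolve_left hi₁
    simpa [Matrix.vecMul, dotProduct] using h4
  -- star y spans the kernel of the transpose
  have hyker : Aᵀ *ᵥ (star y) = 0 := by rw [Matrix.mulVec_transpose]; exact hyA
  have _dummy : True := trivial
  have hsy : (star y : Fin n → ℂ) ≠ 0 := by
    intro h; apply hy; have := congrArg star h; simpa using this
  have hkerT : finrank ℂ (LinearMap.ker Aᵀ.mulVecLin) = 1 := by
    have e1 := LinearMap.finrank_range_add_finrank_ker A.mulVecLin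
    have e2 := LinearMap.finrank_range_add_finrank_ker Aᵀ.mulVecLin
    have e3 : Aᵀ.rank = A.rank := Matrix.rank_transpose A
    unfold Matrix.rank at e3
    rw [Module.finrank_fintype_fun_eq_card] at e1 e2
    omega
  have hkerT' : LinearMap.ker Aᵀ.mulVecLin = Submodule.span ℂ {star y} := by
    refine (Submodule.eq_of_le_of_finrank_le
      ((Submodule.span_singleton_le_iff_mem _ _).mpr ?_) ?_).symm
    · simpa [Matrix.mulVecLin_apply, Matrix.mulVec_transpose] using hyA
    · rw [hkerT, finrank_span_singleton hsy]
  have hcmem : c ∈ LinearMap.ker Aᵀ.mulVecLin := by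
    have hcker2 : c ᵥ* A = 0 := by rwa [Matrix.mulVec_transpose] at hcker
    simpa [Matrix.mulVecLin_apply, Matrix.mulVec_transpose] using hcker2
  rw [hkerT'] at hcmem
  obtain ⟨α, hα⟩ := Submodule.mem_span_singleton.mp hcmem
  have hcj : ∀ j, c j = α * star (y j) := by
    intro j; have := congrFun hα j; simp at this; rw [← this]; rfl
  have hadj2 : ∀ i j, A.adjugate i j = α * x i * star (y j) := by
    intro i j; rw [hadj i j, hcj j]; ring
  -- α ≠ 0 : build an invertible update
  obtain ⟨i₀, hi₀⟩ : ∃ i, y i ≠ 0 := Function.ne_iff.mp hy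
  have hdetN : (A.updateRow i₀ (star x)).det ≠ 0 := by
    intro hdet
    obtain ⟨v, hv0, hv⟩ := Matrix.exists_mulVec_eq_zero_iff.mpr hdet
    -- rows other than i₀ force A v to be supported at i₀
    have hrow : ∀ k, k ≠ i₀ → (A *ᵥ v) k = 0 := by
      intro k hk
      have := congrFun hv k
      simpa [Matrix.mulVec, Matrix.updateRow_ne hk] using this
    have hAv : A *ᵥ v = Pi.single i₀ ((A *ᵥ v) i₀) := by
      funext k
      by_cases hk : k = i₀
      · subst hk; simp
      · rw [hrow k hk, Pi.single_eq_of_ne hk]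
    have hdp : star y ⬝ᵥ (A *ᵥ v) = 0 := by
      rw [Matrix.dotProduct_mulVec, hyA, zero_dotProduct]
    rw [hAv, dotProduct_single] at hdp
    have hAv0 : A *ᵥ v = 0 := by
      rw [hAv]
      have : (A *ᵥ v) i₀ = 0 := by
        rcases mul_eq_zero.mp hdp with h | h
        · exact absurd h (by simpa using hi₀)
        · exact h
      rw [this]; simp
    have hvker : v ∈ LinearMap.ker A.mulVecLin := by
      simpa [Matrix.mulVecLin_apply] using hAv0
    rw [hker] at hvker
    obtain ⟨a, ha⟩ := Submodule.mem_span_singleton.mp hvker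
    have hrowi : star x ⬝ᵥ v = 0 := by
      have := congrFun hv i₀
      simpa [Matrix.mulVec, Matrix.updateRow_self, dotProduct] using this
    rw [← ha, dotProduct_smul] at hrowi
    have hxx : star x ⬝ᵥ x ≠ 0 := dot_star_self_ne_zero hx
    have ha0 : a = 0 := by
      rcases smul_eq_zero.mp hrowi with h | h
      · exact h
      · exact absurd h hxx
    rw [← ha, ha0, zero_smul] at hv0
    exact hv0 rfl
  have hdetN' : (A.updateRow i₀ (star x)).det = α * star (y i₀) * (star x ⬝ᵥ x) := by
    rw [det_updateRow_eq]
    have : ∀ j, A.adjugate j i₀ * (star x) j = α * star (y i₀) * (x j * star (x j)) := by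
      intro j; rw [hadj2 j i₀]; simp [Pi.star_apply]; ring
    rw [Finset.sum_congr rfl fun j _ => this j, ← Finset.mul_sum]
    congr 1
    simp [dotProduct, mul_comm]
  refine ⟨α, ?_, hadj2⟩
  intro hα0
  rw [hdetN', hα0, zero_mul, zero_mul] at hdetN
  exact hdetN rfl


/-- for an eigentriplet `(ŷ, λ̂, x̂)` of a holomorphic matrix family `T`,
the eigenvalue `λ̂` is algebraically simple (simple zero of `det T`) iff it is
geometrically simple and `ŷ* T'(λ̂) x̂ ≠ 0`. -/
theorem algebraic_simplicity_characterization
    {n : ℕ} (T T' : ℂ → Matrix (Fin n) (Fin n) ℂ) (lam : ℂ)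
    (hT : ∀ i j, AnalyticAt ℂ (fun l => T l i j) lam)
    (hT' : ∀ i j, HasDerivAt (fun l => T l i j) (T' lam i j) lam)
    (x y : Fin n → ℂ) (hx : x ≠ 0) (hy : y ≠ 0)
    (hxe : (T lam).mulVec x = 0)
    (hye : ((T lam).conjTranspose).mulVec y = 0) :
    ((T lam).det = 0 ∧ deriv (fun l => (T l).det) lam ≠ 0) ↔
      (Module.finrank ℂ (LinearMap.ker (T lam).mulVecLin) = 1 ∧
        dotProduct (star y) ((T' lam).mulVec x) ≠ 0) := by
  classical
  set A := T lam with hAdef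
  set B := T' lam with hBdef
  have hdetA : A.det = 0 := Matrix.exists_mulVec_eq_zero_iff.mp ⟨x, hx, hxe⟩
  have hxker : x ∈ LinearMap.ker A.mulVecLin := by
    simpa [Matrix.mulVecLin_apply] using hxe
  have hyA : star y ᵥ* A = 0 := by
    have := congrArg star hye
    rwa [Matrix.star_mulVec, Matrix.conjTranspose_conjTranspose, star_zero] at this
  have hder : deriv (fun l => (T l).det) lam = ∑ k, (A.updateRow k (B k)).det :=
    (det_hasDerivAt T B lam hT').deriv
  have pairing : finrank ℂ (LinearMap.ker A.mulVecLin) = 1 →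
      ∃ α : ℂ, α ≠ 0 ∧ (∑ k, (A.updateRow k (B k)).det) = α * (star y ⬝ᵥ B *ᵥ x) := by
    intro h1
    obtain ⟨α, hα0, hadj⟩ := adjugate_structure A x y hx hy hxe hyA h1
    refine ⟨α, hα0, ?_⟩
    have hrhs : star y ⬝ᵥ (B *ᵥ x) = ∑ k, ∑ j, star (y k) * (B k j * x j) := by
      simp [dotProduct, Matrix.mulVec, Finset.mul_sum]
    rw [hrhs, Finset.mul_sum,
      Finset.sum_congr rfl fun k (_ : k ∈ Finset.univ) => det_updateRow_eq A k (B k)]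
    refine Finset.sum_congr rfl fun k _ => ?_
    rw [Finset.mul_sum]
    refine Finset.sum_congr rfl fun j _ => ?_
    rw [hadj j k]
    ring
  constructor
  · rintro ⟨-, hd⟩
    rw [hder] at hd
    have h1 : finrank ℂ (LinearMap.ker A.mulVecLin) = 1 := by
      by_contra hne
      have hge1 : 0 < finrank ℂ (LinearMap.ker A.mulVecLin) :=
        Module.finrank_pos_iff_exists_ne_zero.mpr ⟨⟨x, hxker⟩, by simpa using hx⟩
      have hge2 : 2 ≤ finrank ℂ (LinearMap.ker A.mulVecLin) := by omega
      have hadj0 : A.adjugate = 0 := by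
        ext i j
        rw [Matrix.adjugate_apply, Matrix.zero_apply]
        obtain ⟨v, hv0, hvk, hvi⟩ : ∃ v : Fin n → ℂ, v ≠ 0 ∧ A *ᵥ v = 0 ∧ v i = 0 := by
          set K := LinearMap.ker A.mulVecLin with hK
          set f : K →ₗ[ℂ] ℂ := (LinearMap.proj i).comp K.subtype with hf
          have hr := LinearMap.finrank_range_add_finrank_ker f
          have hr1 : finrank ℂ (LinearMap.range f) ≤ 1 := by
            have := (LinearMap.range f).finrank_le
            simpa using this
          have hpos : 0 < finrank ℂ (LinearMap.ker f) := by omega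
          obtain ⟨w, hw⟩ := (Module.finrank_pos_iff_exists_ne_zero (R := ℂ) (M := LinearMap.ker f)).mp hpos
          refine ⟨((w : K) : Fin n → ℂ), ?_, ?_, ?_⟩
          · intro h0
            exact hw (Subtype.ext (Subtype.ext h0))
          · have hm : ((w : K) : Fin n → ℂ) ∈ LinearMap.ker A.mulVecLin := by
              rw [← hK]; exact (w : K).2
            rw [LinearMap.mem_ker] at hm
            rwa [Matrix.mulVecLin_apply] at hm
          · exact w.2
        exact Matrix.exists_mulVec_eq_zero_iff.mp
          ⟨v, hv0, updateRow_mulVec_zero A j _ v hvk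
            (by rw [single_dotProduct, hvi, mul_zero])⟩
      apply hd
      rw [Finset.sum_congr rfl fun k (_ : k ∈ Finset.univ) => det_updateRow_eq A k (B k)]
      refine Finset.sum_eq_zero fun k _ => Finset.sum_eq_zero fun j _ => ?_
      rw [hadj0]; simp
    obtain ⟨α, hα0, hsum⟩ := pairing h1
    refine ⟨h1, ?_⟩
    intro hp
    rw [hsum, hp, mul_zero] at hd
    exact hd rfl
  · rintro ⟨h1, hp⟩
    obtain ⟨α, hα0, hsum⟩ := pairing h1
    refine ⟨hdetA, ?_⟩
    rw [hder, hsum]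
    exact mul_ne_zero hα0 hp
end
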